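/- arXiv:2409.17151 — 2 statements merged into one kernel-verified Lean document; each statement's English description precedes it below -/
import Mathlib

section
/- Osgood/Grönwall inequality (quantitative form): Let t₀ ≤ T be reals, a > 0, c > 0. Let f : [t₀,T] → (0,∞) be measurable and bounded, let φ : [t₀,T] → [0,∞) be integrable, and let ϖ : (0,∞) → (0,∞) be continuous and nondecreasing. Define Ψ(x) := ∫_x^a dr/ϖ(r) for x > 0 (a strictly decreasing function; Ψ(x) ≤ 0 for x ≥ a). If f(t) ≤ c + ∫_{t₀}^t φ(τ) ϖ(f(τ)) dτ for every t ∈ [t₀,T], then for every t ∈ [t₀,T] one has Ψ(c) − Ψ(f(t)) ≤ ∫_{t₀}^t φ(τ) dτ. -/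
open MeasureTheory intervalIntegral

/-- Composition of a function continuous on `Ioi 0` with an a.e. measurable, a.e.
positive function is a.e. measurable. -/
lemma aemeas_comp_pos {μ : Measure ℝ} {f ϖ : ℝ → ℝ}
    (hf : AEMeasurable f μ) (hϖ : ContinuousOn ϖ (Set.Ioi (0:ℝ)))
    (hpos : ∀ᵐ x ∂μ, 0 < f x) : AEMeasurable (fun x => ϖ (f x)) μ := by
  obtain ⟨g, hg_meas, hfg⟩ := hf
  set g' : ℝ → ℝ := fun x => if 0 < g x then g x else 1 with hg'def
  have hg'_meas : Measurable g' :=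
    Measurable.ite (measurableSet_lt measurable_const hg_meas) hg_meas measurable_const
  have hg'_pos : ∀ x, g' x ∈ Set.Ioi (0:ℝ) := by
    intro x
    by_cases h : 0 < g x <;> simp [g', h]
  have hmeas : Measurable (fun x => ϖ (g' x)) := by
    have hr : Continuous ((Set.Ioi (0:ℝ)).restrict ϖ) := hϖ.restrict
    have heq : (fun x => ϖ (g' x))
        = ((Set.Ioi (0:ℝ)).restrict ϖ) ∘ (fun x => (⟨g' x, hg'_pos x⟩ : Set.Ioi (0:ℝ))) := rfl
    rw [heq]
    exact hr.measurable.comp (hg'_meas.subtype_mk)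
  refine ⟨fun x => ϖ (g' x), hmeas, ?_⟩
  filter_upwards [hfg, hpos] with x hx1 hx2
  have hgx : 0 < g x := hx1 ▸ hx2
  have : g' x = f x := by
    rw [hg'def]
    simp [hgx, hx1]
  rw [this]

/-- **Osgood/Grönwall inequality (quantitative form).** Let `t₀ ≤ T`, `a > 0`, `c > 0`.
Let `f` be a positive measurable bounded function on `[t₀, T]`, `φ ≥ 0` integrable on
`[t₀, T]`, and `ϖ` continuous and nondecreasing on `(0, ∞)` with `ϖ > 0` there.
With `Ψ x = ∫_x^a dr / ϖ r`, if `f t ≤ c + ∫_{t₀}^t φ τ · ϖ (f τ) dτ` on `[t₀, T]`,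
then `Ψ c - Ψ (f t) ≤ ∫_{t₀}^t φ τ dτ` on `[t₀, T]`. -/
theorem osgood_gronwall_quantitative (t₀ T a c : ℝ) (htT : t₀ ≤ T)
    (ha : 0 < a) (hc : 0 < c)
    (f φ ϖ : ℝ → ℝ)
    (hf_meas : AEMeasurable f (volume.restrict (Set.Icc t₀ T)))
    (hf_bdd : ∃ M : ℝ, ∀ t ∈ Set.Icc t₀ T, f t ≤ M)
    (hf_pos : ∀ t ∈ Set.Icc t₀ T, 0 < f t)
    (hφ_int : IntegrableOn φ (Set.Icc t₀ T) volume)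
    (hφ_nonneg : ∀ t ∈ Set.Icc t₀ T, 0 ≤ φ t)
    (hϖ_cont : ContinuousOn ϖ (Set.Ioi (0 : ℝ)))
    (hϖ_mono : MonotoneOn ϖ (Set.Ioi (0 : ℝ)))
    (hϖ_pos : ∀ r : ℝ, 0 < r → 0 < ϖ r)
    (hineq : ∀ t ∈ Set.Icc t₀ T, f t ≤ c + ∫ τ in t₀..t, φ τ * ϖ (f τ)) :
    ∀ t ∈ Set.Icc t₀ T,
      (∫ r in c..a, (ϖ r)⁻¹) - (∫ r in (f t)..a, (ϖ r)⁻¹) ≤ ∫ τ in t₀..t, φ τ := by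
  obtain ⟨M, hM⟩ := hf_bdd
  have ht₀mem : t₀ ∈ Set.Icc t₀ T := ⟨le_refl _, htT⟩
  set g : ℝ → ℝ := fun τ => φ τ * ϖ (f τ) with hg_def
  set F : ℝ → ℝ := fun s => c + ∫ τ in t₀..s, g τ with hF_def
  -- basic positivity facts
  have hg_nonneg : ∀ τ ∈ Set.Icc t₀ T, 0 ≤ g τ := fun τ hτ =>
    mul_nonneg (hφ_nonneg τ hτ) (hϖ_pos _ (hf_pos τ hτ)).le
  -- integrability of g on [t₀, T]
  have hπf_meas : AEMeasurable (fun τ => ϖ (f τ)) (volume.restrict (Set.Icc t₀ T)) :=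
    aemeas_comp_pos hf_meas hϖ_cont (ae_restrict_of_forall_mem measurableSet_Icc hf_pos)
  set C : ℝ := ϖ (max M a) with hCdef
  have hMa_pos : (0:ℝ) < max M a := lt_of_lt_of_le ha (le_max_right _ _)
  have hC_bound : ∀ τ ∈ Set.Icc t₀ T, ϖ (f τ) ≤ C := fun τ hτ =>
    hϖ_mono (hf_pos τ hτ) hMa_pos ((hM τ hτ).trans (le_max_left _ _))
  have hg_int : IntegrableOn g (Set.Icc t₀ T) volume := by
    refine Integrable.mono' (hφ_int.const_mul C) ?_ ?_
    · exact (hφ_int.aemeasurable.mul hπf_meas).aestronglyMeasurable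
    · filter_upwards [ae_restrict_of_forall_mem measurableSet_Icc hf_pos,
        ae_restrict_of_forall_mem measurableSet_Icc hφ_nonneg,
        ae_restrict_of_forall_mem measurableSet_Icc hC_bound] with τ h1 h2 h3
      rw [Real.norm_eq_abs, abs_of_nonneg (mul_nonneg h2 (hϖ_pos _ h1).le), mul_comm C]
      exact mul_le_mul_of_nonneg_left h3 h2
  -- interval integrability on subintervals
  have hsub : ∀ s ∈ Set.Icc t₀ T, ∀ t' ∈ Set.Icc t₀ T, Set.uIoc s t' ⊆ Set.Icc t₀ T := by
    intro s hs t' ht' x hx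
    exact ⟨(le_min hs.1 ht'.1).trans hx.1.le, hx.2.trans (max_le hs.2 ht'.2)⟩
  have hg_ii : ∀ s ∈ Set.Icc t₀ T, ∀ t' ∈ Set.Icc t₀ T, IntervalIntegrable g volume s t' := by
    intro s hs t' ht'
    rw [intervalIntegrable_iff]
    exact hg_int.mono_set (hsub s hs t' ht')
  have hφ_ii : ∀ s ∈ Set.Icc t₀ T, ∀ t' ∈ Set.Icc t₀ T, IntervalIntegrable φ volume s t' := by
    intro s hs t' ht'
    rw [intervalIntegrable_iff]
    exact hφ_int.mono_set (hsub s hs t' ht')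
  -- F basic facts
  have hF_sub : ∀ s ∈ Set.Icc t₀ T, ∀ t' ∈ Set.Icc t₀ T,
      F t' - F s = ∫ τ in s..t', g τ := by
    intro s hs t' ht'
    have h1 := integral_add_adjacent_intervals (hg_ii t₀ ht₀mem s hs) (hg_ii s hs t' ht')
    simp only [hF_def]
    linarith [h1]
  have hF_mono : ∀ s ∈ Set.Icc t₀ T, ∀ t' ∈ Set.Icc t₀ T, s ≤ t' → F s ≤ F t' := by
    intro s hs t' ht' hst
    have h0 : 0 ≤ ∫ τ in s..t', g τ := by
      refine intervalIntegral.integral_nonneg hst fun u hu => hg_nonneg u ?_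
      exact ⟨hs.1.trans hu.1, hu.2.trans ht'.2⟩
    linarith [hF_sub s hs t' ht']
  have hFt₀ : F t₀ = c := by simp [hF_def]
  have hF_ge : ∀ s ∈ Set.Icc t₀ T, c ≤ F s := by
    intro s hs
    have := hF_mono t₀ ht₀mem s hs hs.1
    rwa [hFt₀] at this
  have hF_pos : ∀ s ∈ Set.Icc t₀ T, 0 < F s := fun s hs => lt_of_lt_of_le hc (hF_ge s hs)
  have hf_le_F : ∀ τ ∈ Set.Icc t₀ T, f τ ≤ F τ := hineq
  -- continuity of F and uniform continuity of ϖ ∘ F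
  have hF_cont : ContinuousOn F (Set.Icc t₀ T) := by
    have h1 : ContinuousOn (fun s => ∫ τ in t₀..s, g τ) (Set.Icc t₀ T) := by
      have := intervalIntegral.continuousOn_primitive_interval
        (a := t₀) (b := T) (μ := volume) (f := g) (by rwa [Set.uIcc_of_le htT])
      rwa [Set.uIcc_of_le htT] at this
    exact continuousOn_const.add h1
  set w : ℝ → ℝ := fun τ => ϖ (F τ) with hw_def
  have hw_cont : ContinuousOn w (Set.Icc t₀ T) :=
    hϖ_cont.comp hF_cont fun τ hτ => hF_pos τ hτ
  have hw_unif := isCompact_Icc.uniformContinuousOn_of_continuous hw_cont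
  -- interval integrability of (ϖ ·)⁻¹ on positive intervals
  have hϖinv_ii : ∀ x y : ℝ, 0 < x → 0 < y →
      IntervalIntegrable (fun r => (ϖ r)⁻¹) volume x y := by
    intro x y hx hy
    have hsub' : Set.uIcc x y ⊆ Set.Ioi 0 := fun r hr => lt_of_lt_of_le (lt_min hx hy) hr.1
    exact (((hϖ_cont.mono hsub').inv₀ fun r hr => (hϖ_pos r (hsub' hr)).ne').intervalIntegrable)
  intro t ht
  -- rewrite the LHS as ∫_c^{f t}
  have hft_pos : 0 < f t := hf_pos t ht
  have hsplit : (∫ r in c..a, (ϖ r)⁻¹) - (∫ r in (f t)..a, (ϖ r)⁻¹)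
      = ∫ r in c..(f t), (ϖ r)⁻¹ := by
    have := integral_add_adjacent_intervals (hϖinv_ii c (f t) hc hft_pos)
      (hϖinv_ii (f t) a hft_pos ha)
    linarith [this]
  rw [hsplit]
  -- step A : compare with ∫_c^{F t}
  have hstepA : (∫ r in c..(f t), (ϖ r)⁻¹) ≤ ∫ r in c..(F t), (ϖ r)⁻¹ := by
    have hFt_pos : 0 < F t := hF_pos t ht
    have hadd := integral_add_adjacent_intervals (hϖinv_ii c (f t) hc hft_pos)
      (hϖinv_ii (f t) (F t) hft_pos hFt_pos)
    have hnn : 0 ≤ ∫ r in (f t)..(F t), (ϖ r)⁻¹ := by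
      refine intervalIntegral.integral_nonneg (hf_le_F t ht) fun r hr => ?_
      exact inv_nonneg.mpr (hϖ_pos r (lt_of_lt_of_le hft_pos hr.1)).le
    linarith [hadd]
  refine hstepA.trans ?_
  -- step B : main estimate ∫_c^{F t} (ϖ r)⁻¹ ≤ ∫_{t₀}^t φ
  have hS_nonneg : 0 ≤ ∫ τ in t₀..t, φ τ := by
    refine intervalIntegral.integral_nonneg ht.1 fun u hu => hφ_nonneg u ⟨hu.1, hu.2.trans ht.2⟩
  have key : ∀ ε' : ℝ, 0 < ε' →
      (∫ r in c..(F t), (ϖ r)⁻¹) ≤ (1 + ε') * ∫ τ in t₀..t, φ τ := by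
    intro ε' hε'
    set ε'' : ℝ := ε' * ϖ c with hε''def
    have hε''pos : 0 < ε'' := mul_pos hε' (hϖ_pos c hc)
    obtain ⟨δ, hδpos, hδ⟩ := (Metric.uniformContinuousOn_iff.mp hw_unif) ε'' hε''pos
    -- the one-step estimate
    have key2 : ∀ s ∈ Set.Icc t₀ T, ∀ t' ∈ Set.Icc t₀ T, s ≤ t' → t' - s < δ →
        (∫ r in (F s)..(F t'), (ϖ r)⁻¹) ≤ (1 + ε') * ∫ τ in s..t', φ τ := by
      intro s hs t' ht' hst hlt
      have hFs_pos : 0 < F s := hF_pos s hs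
      have hFt'_pos : 0 < F t' := hF_pos t' ht'
      have hFst : F s ≤ F t' := hF_mono s hs t' ht' hst
      have hwFs_pos : 0 < ϖ (F s) := hϖ_pos _ hFs_pos
      set Sφ : ℝ := ∫ τ in s..t', φ τ with hSφdef
      have hSφ_nonneg : 0 ≤ Sφ := by
        refine intervalIntegral.integral_nonneg hst fun u hu => ?_
        exact hφ_nonneg u ⟨hs.1.trans hu.1, hu.2.trans ht'.2⟩
      -- A1
      have hA1 : (∫ r in (F s)..(F t'), (ϖ r)⁻¹) ≤ (F t' - F s) * (ϖ (F s))⁻¹ := by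
        have hmono := intervalIntegral.integral_mono_on (μ := volume) hFst
          (hϖinv_ii (F s) (F t') hFs_pos hFt'_pos) intervalIntegrable_const
          (g := fun _ => (ϖ (F s))⁻¹) (fun r hr => by
            refine inv_anti₀ hwFs_pos ?_
            exact hϖ_mono hFs_pos (lt_of_lt_of_le hFs_pos hr.1) hr.1)
        rwa [intervalIntegral.integral_const, smul_eq_mul] at hmono
      -- A2
      have hA2 : F t' - F s ≤ ϖ (F t') * Sφ := by
        have hmono := intervalIntegral.integral_mono_on (μ := volume) hst
          (hg_ii s hs t' ht') ((hφ_ii s hs t' ht').const_mul (ϖ (F t')))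
          (g := fun τ => ϖ (F t') * φ τ) (fun τ hτ => by
            have hτmem : τ ∈ Set.Icc t₀ T := ⟨hs.1.trans hτ.1, hτ.2.trans ht'.2⟩
            have h1 : ϖ (f τ) ≤ ϖ (F t') :=
              hϖ_mono (hf_pos τ hτmem) hFt'_pos
                ((hf_le_F τ hτmem).trans (hF_mono τ hτmem t' ht' hτ.2))
            calc g τ = φ τ * ϖ (f τ) := rfl
              _ ≤ φ τ * ϖ (F t') := mul_le_mul_of_nonneg_left h1 (hφ_nonneg τ hτmem)
              _ = ϖ (F t') * φ τ := mul_comm _ _)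
        rw [intervalIntegral.integral_const_mul] at hmono
        linarith [hF_sub s hs t' ht', hmono]
      -- A3
      have hA3 : ϖ (F t') ≤ ϖ (F s) + ε'' := by
        have hd := hδ t' ht' s hs (by rw [Real.dist_eq]; rw [abs_of_nonneg (by linarith)]; exact hlt)
        rw [Real.dist_eq] at hd
        have := abs_lt.mp hd
        simp only [hw_def] at this
        linarith [this.1, this.2]
      -- combine
      have hwc : ϖ c ≤ ϖ (F s) := hϖ_mono hc hFs_pos (hF_ge s hs)
      have hinv1 : (ϖ (F s))⁻¹ ≤ (ϖ c)⁻¹ := inv_anti₀ (hϖ_pos c hc) hwc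
      have hinv_pos : 0 < (ϖ (F s))⁻¹ := inv_pos.mpr hwFs_pos
      calc (∫ r in (F s)..(F t'), (ϖ r)⁻¹)
          ≤ (F t' - F s) * (ϖ (F s))⁻¹ := hA1
        _ ≤ (ϖ (F t') * Sφ) * (ϖ (F s))⁻¹ := by
            exact mul_le_mul_of_nonneg_right hA2 hinv_pos.le
        _ ≤ ((ϖ (F s) + ε'') * Sφ) * (ϖ (F s))⁻¹ := by
            refine mul_le_mul_of_nonneg_right (mul_le_mul_of_nonneg_right hA3 hSφ_nonneg) hinv_pos.le
        _ = Sφ + (ε'' * (ϖ (F s))⁻¹) * Sφ := by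
            field_simp
        _ ≤ Sφ + ε' * Sφ := by
            have h1 : ε'' * (ϖ (F s))⁻¹ ≤ ε'' * (ϖ c)⁻¹ :=
              mul_le_mul_of_nonneg_left hinv1 hε''pos.le
            have h2 : ε'' * (ϖ c)⁻¹ = ε' := by
              rw [hε''def, mul_assoc, mul_inv_cancel₀ (hϖ_pos c hc).ne', mul_one]
            nlinarith [mul_le_mul_of_nonneg_right (h1.trans h2.le) hSφ_nonneg]
        _ = (1 + ε') * Sφ := by ring
    -- choose a fine partition of [t₀, t]
    obtain ⟨n, hn⟩ := exists_nat_gt ((t - t₀) / δ)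
    set m : ℕ := n + 1 with hmdef
    have hmpos : (0:ℝ) < (m:ℝ) := by positivity
    set d : ℝ := (t - t₀) / m with hddef
    have htt₀ : 0 ≤ t - t₀ := by linarith [ht.1]
    have hd_nonneg : 0 ≤ d := div_nonneg htt₀ hmpos.le
    have hd_lt : d < δ := by
      rw [hddef, div_lt_iff₀ hmpos]
      have h1 : (t - t₀) / δ < (m:ℝ) := by
        have : (n:ℝ) ≤ (m:ℝ) := by exact_mod_cast Nat.le_succ n
        linarith
      calc t - t₀ = ((t - t₀) / δ) * δ := by field_simp
        _ < (m:ℝ) * δ := by exact mul_lt_mul_of_pos_right h1 hδpos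
        _ = δ * m := mul_comm _ _
    set u : ℕ → ℝ := fun i => t₀ + i * d with hudef
    have hu0 : u 0 = t₀ := by simp [hudef]
    have hum : u m = t := by
      rw [hudef]
      simp only []
      rw [hddef]
      field_simp
      ring
    have hu_mem : ∀ i : ℕ, i ≤ m → u i ∈ Set.Icc t₀ t := by
      intro i hi
      constructor
      · rw [hudef]; simp only []
        nlinarith [hd_nonneg, Nat.cast_nonneg (α := ℝ) i]
      · have h1 : (i:ℝ) * d ≤ (m:ℝ) * d := by
          refine mul_le_mul_of_nonneg_right ?_ hd_nonneg
          exact_mod_cast hi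
        have h2 : u m = t := hum
        rw [hudef] at h2 ⊢
        simp only [] at h2 ⊢
        linarith
    have hIccsub : Set.Icc t₀ t ⊆ Set.Icc t₀ T := Set.Icc_subset_Icc le_rfl ht.2
    have hu_step : ∀ i : ℕ, u (i+1) - u i = d := by
      intro i
      rw [hudef]
      push_cast
      ring
    -- induction over the partition
    have main : ∀ i : ℕ, i ≤ m →
        (∫ r in c..(F (u i)), (ϖ r)⁻¹) ≤ (1 + ε') * ∫ τ in t₀..(u i), φ τ := by
      intro i
      induction i with
      | zero =>
        intro _
        rw [hu0, hFt₀]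
        simp
      | succ i ih =>
        intro hi
        have hi' : i ≤ m := Nat.le_of_succ_le hi
        have hmem1 : u i ∈ Set.Icc t₀ T := hIccsub (hu_mem i hi')
        have hmem2 : u (i+1) ∈ Set.Icc t₀ T := hIccsub (hu_mem (i+1) hi)
        have hle : u i ≤ u (i+1) := by linarith [hu_step i, hd_nonneg]
        have hadd1 : (∫ r in c..(F (u (i+1))), (ϖ r)⁻¹)
            = (∫ r in c..(F (u i)), (ϖ r)⁻¹) + ∫ r in (F (u i))..(F (u (i+1))), (ϖ r)⁻¹ :=
          (integral_add_adjacent_intervals (hϖinv_ii c _ hc (hF_pos _ hmem1))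
            (hϖinv_ii _ _ (hF_pos _ hmem1) (hF_pos _ hmem2))).symm
        have hadd2 : (∫ τ in t₀..(u (i+1)), φ τ)
            = (∫ τ in t₀..(u i), φ τ) + ∫ τ in (u i)..(u (i+1)), φ τ :=
          (integral_add_adjacent_intervals (hφ_ii t₀ ht₀mem _ hmem1)
            (hφ_ii _ hmem1 _ hmem2)).symm
        have hk := key2 (u i) hmem1 (u (i+1)) hmem2 hle (by rw [hu_step i]; exact hd_lt)
        rw [hadd1, hadd2, mul_add]
        exact add_le_add (ih hi') hk
    have := main m le_rfl
    rwa [hum] at this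
  -- take ε' → 0
  by_contra hcon
  push_neg at hcon
  set S : ℝ := ∫ τ in t₀..t, φ τ with hSdef
  set H : ℝ := ∫ r in c..(F t), (ϖ r)⁻¹ with hHdef
  have hHS : S < H := hcon
  have hε'pos : 0 < (H - S) / (2 * (S + 1)) := by
    apply div_pos <;> [skip; skip] <;> linarith
  have hk := key ((H - S) / (2 * (S + 1))) hε'pos
  have hS1 : S ≤ S + 1 := by linarith
  have h1 : (H - S) / (2 * (S + 1)) * S ≤ (H - S) / (2 * (S + 1)) * (S + 1) :=
    mul_le_mul_of_nonneg_left hS1 hε'pos.le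
  have h2 : (H - S) / (2 * (S + 1)) * (S + 1) = (H - S) / 2 := by
    field_simp
  nlinarith [hk]
end

section
/- Osgood uniqueness lemma: Let t₀ ≤ T be reals. Let f : [t₀,T] → [0,∞) be measurable and bounded, let φ : [t₀,T] → [0,∞) be integrable, and let ϖ : [0,∞) → [0,∞) be continuous, nondecreasing, with ϖ(r) > 0 for r > 0. Assume f(t) ≤ ∫_{t₀}^t φ(τ) ϖ(f(τ)) dτ for every t ∈ [t₀,T], and assume the Osgood condition ∫_0^a dr/ϖ(r) = ∞ for some a > 0 (i.e. the integral diverges at 0). Then f(t) = 0 for every t ∈ [t₀,T]. -/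
open MeasureTheory intervalIntegral Filter

/-- **Osgood uniqueness lemma.** Let `t₀ ≤ T`, let `f ≥ 0` be measurable and bounded on
`[t₀, T]`, `φ ≥ 0` integrable on `[t₀, T]`, and `ϖ : [0,∞) → [0,∞)` continuous,
nondecreasing, positive on `(0, ∞)`. Assume `f t ≤ ∫_{t₀}^t φ τ · ϖ (f τ) dτ` on
`[t₀, T]` and the Osgood condition `∫_0^a dr / ϖ r = ∞` for some `a > 0` (i.e. the
integrals `∫_ε^a dr / ϖ r` are finite for `0 < ε < a` and tend to `+∞` as `ε → 0⁺`).
Then `f ≡ 0` on `[t₀, T]`. -/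
theorem osgood_uniqueness (t₀ T a : ℝ) (htT : t₀ ≤ T) (ha : 0 < a)
    (f φ ϖ : ℝ → ℝ)
    (hf_meas : AEMeasurable f (volume.restrict (Set.Icc t₀ T)))
    (hf_nonneg : ∀ t ∈ Set.Icc t₀ T, 0 ≤ f t)
    (hf_bdd : ∃ M : ℝ, ∀ t ∈ Set.Icc t₀ T, f t ≤ M)
    (hφ_int : IntegrableOn φ (Set.Icc t₀ T) volume)
    (hφ_nonneg : ∀ t ∈ Set.Icc t₀ T, 0 ≤ φ t)
    (hϖ_cont : ContinuousOn ϖ (Set.Ici (0 : ℝ)))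
    (hϖ_mono : MonotoneOn ϖ (Set.Ici (0 : ℝ)))
    (hϖ_nonneg : ∀ r : ℝ, 0 ≤ r → 0 ≤ ϖ r)
    (hϖ_pos : ∀ r : ℝ, 0 < r → 0 < ϖ r)
    (hineq : ∀ t ∈ Set.Icc t₀ T, f t ≤ ∫ τ in t₀..t, φ τ * ϖ (f τ))
    (hosgood_int : ∀ ε ∈ Set.Ioo (0 : ℝ) a,
      IntervalIntegrable (fun r => (ϖ r)⁻¹) volume ε a)
    (hosgood : Tendsto (fun ε => ∫ r in ε..a, (ϖ r)⁻¹)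
      (nhdsWithin 0 (Set.Ioi (0 : ℝ))) atTop) :
    ∀ t ∈ Set.Icc t₀ T, f t = 0 := by
  obtain ⟨M, hM⟩ := hf_bdd
  -- `Ω` is a globally continuous, monotone extension of `ϖ`.
  set Ω : ℝ → ℝ := fun r => ϖ (max r 0) with hΩdef
  have hΩc : Continuous Ω :=
    hϖ_cont.comp_continuous (continuous_id.max continuous_const) (fun x => Set.mem_Ici.mpr (le_max_right _ _))
  have hΩmono : Monotone Ω := fun x y hxy =>
    hϖ_mono (Set.mem_Ici.mpr (le_max_right _ _)) (Set.mem_Ici.mpr (le_max_right _ _)) (max_le_max hxy le_rfl)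
  have hΩnonneg : ∀ r, 0 ≤ Ω r := fun r => hϖ_nonneg _ (le_max_right _ _)
  have hΩpos : ∀ r, 0 < r → 0 < Ω r := fun r hr => by
    have : max r 0 = r := max_eq_left hr.le
    simpa [hΩdef, this] using hϖ_pos r hr
  have hΩeq : ∀ r, 0 ≤ r → Ω r = ϖ r := fun r hr => by simp [hΩdef, max_eq_left hr]
  -- the integrand `g`
  set g : ℝ → ℝ := fun τ => Ω (f τ) * φ τ with hgdef
  have hg_int : IntegrableOn g (Set.Icc t₀ T) volume := by
    apply Integrable.bdd_mul (c := Ω (max M 0)) hφ_int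
    · exact (hΩc.measurable.comp_aemeasurable hf_meas).aestronglyMeasurable
    · filter_upwards [ae_restrict_mem measurableSet_Icc] with x hx
      rw [Real.norm_eq_abs, abs_of_nonneg (hΩnonneg _)]
      exact hΩmono (le_trans (hM x hx) (le_max_left _ _))
  have hg_ii : ∀ s ∈ Set.Icc t₀ T, ∀ t ∈ Set.Icc t₀ T, IntervalIntegrable g volume s t :=
    fun s hs t ht => (hg_int.mono_set (Set.uIcc_subset_Icc hs ht)).intervalIntegrable
  have hφ_ii : ∀ s ∈ Set.Icc t₀ T, ∀ t ∈ Set.Icc t₀ T, IntervalIntegrable φ volume s t :=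
    fun s hs t ht => (hφ_int.mono_set (Set.uIcc_subset_Icc hs ht)).intervalIntegrable
  have hg_nonneg : ∀ τ ∈ Set.Icc t₀ T, 0 ≤ g τ := fun τ hτ =>
    mul_nonneg (hΩnonneg _) (hφ_nonneg τ hτ)
  -- the functions I and Φ
  set I : ℝ → ℝ := fun t => ∫ τ in t₀..t, g τ with hIdef
  set Φ : ℝ → ℝ := fun t => ∫ τ in t₀..t, φ τ with hΦdef
  have ht₀ : t₀ ∈ Set.Icc t₀ T := ⟨le_rfl, htT⟩
  have hI_add : ∀ s ∈ Set.Icc t₀ T, ∀ t ∈ Set.Icc t₀ T,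
      I s + ∫ τ in s..t, g τ = I t := fun s hs t ht =>
    integral_add_adjacent_intervals (hg_ii t₀ ht₀ s hs) (hg_ii s hs t ht)
  have hΦ_add : ∀ s ∈ Set.Icc t₀ T, ∀ t ∈ Set.Icc t₀ T,
      Φ s + ∫ τ in s..t, φ τ = Φ t := fun s hs t ht =>
    integral_add_adjacent_intervals (hφ_ii t₀ ht₀ s hs) (hφ_ii s hs t ht)
  have hI_mono : ∀ s ∈ Set.Icc t₀ T, ∀ t ∈ Set.Icc t₀ T, s ≤ t → I s ≤ I t := by
    intro s hs t ht hst
    have h0 : 0 ≤ ∫ τ in s..t, g τ :=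
      intervalIntegral.integral_nonneg hst
        (fun u hu => hg_nonneg u ⟨le_trans hs.1 hu.1, le_trans hu.2 ht.2⟩)
    linarith [hI_add s hs t ht]
  have hΦ_mono : ∀ s ∈ Set.Icc t₀ T, ∀ t ∈ Set.Icc t₀ T, s ≤ t → Φ s ≤ Φ t := by
    intro s hs t ht hst
    have h0 : 0 ≤ ∫ τ in s..t, φ τ :=
      intervalIntegral.integral_nonneg hst
        (fun u hu => hφ_nonneg u ⟨le_trans hs.1 hu.1, le_trans hu.2 ht.2⟩)
    linarith [hΦ_add s hs t ht]
  have hI_t₀ : I t₀ = 0 := intervalIntegral.integral_same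
  have hΦ_t₀ : Φ t₀ = 0 := intervalIntegral.integral_same
  have hI_nonneg : ∀ t ∈ Set.Icc t₀ T, 0 ≤ I t := fun t ht => by
    have := hI_mono t₀ ht₀ t ht ht.1; rwa [hI_t₀] at this
  have hI_cont : ContinuousOn I (Set.Icc t₀ T) := by
    have h1 := intervalIntegral.continuousOn_primitive (f := g) (μ := volume) hg_int
    apply h1.congr
    intro t ht
    simp only [hIdef]
    rw [intervalIntegral.integral_of_le ht.1]
  -- f ≤ I on [t₀, T]
  have hfI : ∀ t ∈ Set.Icc t₀ T, f t ≤ I t := by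
    intro t ht
    have : (∫ τ in t₀..t, φ τ * ϖ (f τ)) = I t := by
      apply intervalIntegral.integral_congr
      intro τ hτ
      have hτ' : τ ∈ Set.Icc t₀ T := by
        rw [Set.uIcc_of_le ht.1] at hτ
        exact ⟨hτ.1, le_trans hτ.2 ht.2⟩
      simp only [hgdef]
      rw [hΩeq _ (hf_nonneg τ hτ'), mul_comm]
    rw [← this]
    exact hineq t ht
  -- main claim: f vanishes
  intro t₁ ht₁
  refine le_antisymm ?_ (hf_nonneg t₁ ht₁)
  by_contra hc
  push_neg at hc
  set b : ℝ := min (f t₁) a with hbdef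
  have hb : 0 < b := lt_min hc ha
  have hba : b ≤ a := min_le_right _ _
  set K : ℝ := 2 * Φ T + ∫ r in b..a, (ϖ r)⁻¹ with hKdef
  -- For every ε ∈ (0, b), the Osgood integral is bounded by K.
  have claim : ∀ ε ∈ Set.Ioo (0:ℝ) b, (∫ r in ε..a, (ϖ r)⁻¹) ≤ K := by
    rintro ε ⟨hε, hεb⟩
    -- integrability of Ω⁻¹ above ε
    have hΩinv_cont : ContinuousOn (fun r => (Ω r)⁻¹) (Set.Ici ε) :=
      hΩc.continuousOn.inv₀ (fun r hr => (hΩpos r (lt_of_lt_of_le hε hr)).ne')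
    have hΩinv_ii : ∀ x y : ℝ, ε ≤ x → ε ≤ y →
        IntervalIntegrable (fun r => (Ω r)⁻¹) volume x y := by
      intro x y hx hy
      apply (hΩinv_cont.mono ?_).intervalIntegrable
      intro z hz
      rw [Set.uIcc_eq_union] at hz
      rcases hz with h | h
      · exact le_trans hx h.1
      · exact le_trans hy h.1
    set W : ℝ → ℝ := fun u => ∫ r in ε..u, (Ω r)⁻¹ with hWdef
    have hW_add : ∀ x y : ℝ, ε ≤ x → ε ≤ y →
        W x + ∫ r in x..y, (Ω r)⁻¹ = W y := fun x y hx hy =>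
      integral_add_adjacent_intervals (hΩinv_ii ε x le_rfl hx) (hΩinv_ii x y hx hy)
    -- key increment estimate for W
    have hW_incr : ∀ x y : ℝ, ε ≤ x → x ≤ y → W y ≤ W x + (y - x) * (Ω x)⁻¹ := by
      intro x y hx hxy
      have hxpos : 0 < Ω x := hΩpos x (lt_of_lt_of_le hε hx)
      have h1 : (∫ r in x..y, (Ω r)⁻¹) ≤ ∫ _ in x..y, (Ω x)⁻¹ := by
        apply intervalIntegral.integral_mono_on hxy (hΩinv_ii x y hx (le_trans hx hxy))
          intervalIntegrable_const
        intro u hu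
        exact inv_anti₀ hxpos (hΩmono hu.1)
      rw [intervalIntegral.integral_const] at h1
      have := hW_add x y hx (le_trans hx hxy)
      simp only [smul_eq_mul] at h1
      linarith
    -- uniform continuity of t ↦ Ω (ε + I t)
    have hucont : UniformContinuousOn (fun t => Ω (ε + I t)) (Set.Icc t₀ T) :=
      isCompact_Icc.uniformContinuousOn_of_continuous
        (hΩc.comp_continuousOn (continuousOn_const.add hI_cont))
    obtain ⟨η, hη, hη'⟩ := Metric.uniformContinuousOn_iff.mp hucont (Ω ε) (hΩpos ε hε)
    -- doubling estimate
    have hdouble : ∀ s ∈ Set.Icc t₀ T, ∀ t ∈ Set.Icc t₀ T, |s - t| < η →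
        Ω (ε + I t) ≤ 2 * Ω (ε + I s) := by
      intro s hs t ht hd
      have h1 := hη' s hs t ht (by rwa [Real.dist_eq])
      rw [Real.dist_eq] at h1
      have h2 : Ω ε ≤ Ω (ε + I s) := hΩmono (by linarith [hI_nonneg s hs])
      have := abs_lt.mp h1
      linarith [this.1, this.2]
    -- the inductive bound
    have hεI : ∀ t ∈ Set.Icc t₀ T, ε ≤ ε + I t := fun t ht => by
      linarith [hI_nonneg t ht]
    have hIincr : ∀ s ∈ Set.Icc t₀ T, ∀ t ∈ Set.Icc t₀ T, s ≤ t →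
        I t - I s ≤ Ω (ε + I t) * (Φ t - Φ s) := by
      intro s hs t ht hst
      have h1 : (∫ τ in s..t, g τ) ≤ ∫ τ in s..t, Ω (ε + I t) * φ τ := by
        apply intervalIntegral.integral_mono_on hst (hg_ii s hs t ht)
          ((hφ_ii s hs t ht).const_mul _)
        intro u hu
        have hu' : u ∈ Set.Icc t₀ T := ⟨le_trans hs.1 hu.1, le_trans hu.2 ht.2⟩
        apply mul_le_mul_of_nonneg_right ?_ (hφ_nonneg u hu')
        apply hΩmono
        calc f u ≤ I u := hfI u hu'
          _ ≤ I t := hI_mono u hu' t ht hu.2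
          _ ≤ ε + I t := by linarith
      rw [intervalIntegral.integral_const_mul] at h1
      have e1 := hI_add s hs t ht
      have e2 := hΦ_add s hs t ht
      have e2' : (∫ τ in s..t, φ τ) = Φ t - Φ s := by linarith
      rw [e2'] at h1
      linarith
    have main : ∀ n : ℕ, ∀ t ∈ Set.Icc t₀ T, t ≤ t₀ + n * (η / 2) →
        W (ε + I t) ≤ 2 * Φ t := by
      intro n
      induction n with
      | zero =>
        intro t ht hle
        have : t = t₀ := le_antisymm (by simpa using hle) ht.1
        subst this
        rw [hI_t₀, hΦ_t₀, add_zero]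
        simp [hWdef]
      | succ n ih =>
        intro t ht hle
        set s : ℝ := max t₀ (t - η / 2) with hsdef
        have hs1 : t₀ ≤ s := le_max_left _ _
        have hs2 : s ≤ t := max_le ht.1 (by linarith)
        have hsIcc : s ∈ Set.Icc t₀ T := ⟨hs1, le_trans hs2 ht.2⟩
        have hsn : s ≤ t₀ + n * (η / 2) := by
          apply max_le
          · nlinarith [Nat.cast_nonneg (α := ℝ) n, hη]
          · push_cast at hle ⊢; linarith
        have hts : t - s ≤ η / 2 := by
          have : t - η / 2 ≤ s := le_max_right _ _
          linarith
        have hdist : |s - t| < η := by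
          rw [abs_sub_comm, abs_of_nonneg (by linarith)]
          linarith
        have ihs := ih s hsIcc hsn
        have hxε : ε ≤ ε + I s := hεI s hsIcc
        have hIle : ε + I s ≤ ε + I t := by linarith [hI_mono s hsIcc t ht hs2]
        have h1 := hW_incr (ε + I s) (ε + I t) hxε hIle
        have h2 := hIincr s hsIcc t ht hs2
        have h3 := hdouble s hsIcc t ht hdist
        have hApos : 0 < Ω (ε + I s) := hΩpos _ (lt_of_lt_of_le hε hxε)
        have hD : 0 ≤ Φ t - Φ s := by linarith [hΦ_mono s hsIcc t ht hs2]
        have h4 : (ε + I t - (ε + I s)) * (Ω (ε + I s))⁻¹ ≤ 2 * (Φ t - Φ s) := by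
          have h5 : ε + I t - (ε + I s) ≤ 2 * Ω (ε + I s) * (Φ t - Φ s) := by
            have : Ω (ε + I t) * (Φ t - Φ s) ≤ 2 * Ω (ε + I s) * (Φ t - Φ s) :=
              mul_le_mul_of_nonneg_right h3 hD
            linarith
          calc (ε + I t - (ε + I s)) * (Ω (ε + I s))⁻¹
              ≤ (2 * Ω (ε + I s) * (Φ t - Φ s)) * (Ω (ε + I s))⁻¹ :=
                mul_le_mul_of_nonneg_right h5 (inv_nonneg.mpr hApos.le)
            _ = 2 * (Φ t - Φ s) := by field_simp
        linarith
    -- apply with large n at t₁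
    obtain ⟨n, hn⟩ := exists_nat_ge ((T - t₀) / (η / 2))
    have hn' : T ≤ t₀ + n * (η / 2) := by
      rw [div_le_iff₀ (by linarith)] at hn
      linarith
    have hWbound : W (ε + I t₁) ≤ 2 * Φ T := by
      calc W (ε + I t₁) ≤ 2 * Φ t₁ := main n t₁ ht₁ (le_trans ht₁.2 hn')
        _ ≤ 2 * Φ T := by linarith [hΦ_mono t₁ ht₁ T ⟨htT, le_rfl⟩ ht₁.2]
    -- now compare with the ϖ-integrals
    have hbI : b ≤ ε + I t₁ := by
      have : b ≤ f t₁ := min_le_left _ _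
      linarith [hfI t₁ ht₁, this]
    have hεb' : ε ≤ b := hεb.le
    have h6 : W b ≤ W (ε + I t₁) := by
      have h7 : 0 ≤ ∫ r in b..(ε + I t₁), (Ω r)⁻¹ :=
        intervalIntegral.integral_nonneg hbI
          (fun u hu => inv_nonneg.mpr (hΩnonneg u))
      have := hW_add b (ε + I t₁) hεb' (le_trans hεb' hbI)
      linarith
    have hsplit : W a = W b + ∫ r in b..a, (Ω r)⁻¹ := (hW_add b a hεb' (le_trans hεb' hba)).symm
    have hcongr : ∀ x y : ℝ, 0 < x → 0 < y →
        (∫ r in x..y, (ϖ r)⁻¹) = ∫ r in x..y, (Ω r)⁻¹ := by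
      intro x y hx hy
      apply intervalIntegral.integral_congr
      intro r hr
      have : 0 < r := lt_of_lt_of_le (lt_min hx hy) (by
        rw [Set.uIcc_eq_union] at hr
        rcases hr with h | h
        · exact le_trans (min_le_left x y) h.1
        · exact le_trans (min_le_right x y) h.1)
      simp only []
      rw [hΩeq r this.le]
    rw [hcongr ε a hε ha, hKdef, hcongr b a hb ha]
    calc W a = W b + ∫ r in b..a, (Ω r)⁻¹ := hsplit
      _ ≤ 2 * Φ T + ∫ r in b..a, (Ω r)⁻¹ := by linarith [le_trans h6 hWbound]
  -- contradiction with divergence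
  have h1 : ∀ᶠ ε in nhdsWithin 0 (Set.Ioi (0:ℝ)), K < ∫ r in ε..a, (ϖ r)⁻¹ :=
    hosgood.eventually_gt_atTop K
  have h2 : ∀ᶠ ε in nhdsWithin 0 (Set.Ioi (0:ℝ)), ε ∈ Set.Ioo (0:ℝ) b :=
    Ioo_mem_nhdsGT_of_mem ⟨le_rfl, hb⟩
  obtain ⟨ε, hε1, hε2⟩ := (h1.and h2).exists
  exact absurd (claim ε hε2) (not_le.mpr hε1)
end
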